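/- arXiv:1708.04986 — 2 statements merged into one kernel-verified Lean document; each statement's English description precedes it below -/
import Mathlib

section
/- For every n ≥ 7 with n ≡ 1 (mod 6), the Steiner triple system on {0,1,...,n-1} obtained by applying the Skolem Mapping to the blocks of the Skolem Construction has max-sum at most (8n-11)/3. -/
/-- The Skolem operation on `{0,1,…,m-1}` (for `m` even):
`x ⊕_s y = ((x+y) mod m)/2` if `(x+y) mod m` is even, and
`x ⊕_s y = (((x+y) mod m)+m-1)/2` if `(x+y) mod m` is odd. -/
def skolemOp (m x y : ℕ) : ℕ :=
  if Even ((x + y) % m) then (x + y) % m / 2 else ((x + y) % m + m - 1) / 2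

/-- The unique `y` with `(m-1) ⊕_s y = x` (used to define `π_S((x,1))`):
`y = 0` if `x = m-1`, `y = 2x+1` if `x < m/2`, and `y = 2x+2-m` otherwise. -/
def skolemInv (m x : ℕ) : ℕ :=
  if x = m - 1 then 0 else if x < m / 2 then 2 * x + 1 else 2 * x + 2 - m

/-- The Skolem Mapping `π_S` on the point set
`X' = {∞} ∪ {(x,i) : x ∈ {0,…,m-1}, i ∈ {0,1,2}}` (with `∞` encoded as `none`):
`(x,0) ↦ m-1-x`; `(x,1) ↦ 2m+1` if `x = m/2-1`, and `(x,1) ↦ 2m+2+y` where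
`x = (m-1) ⊕_s y ≠ m/2-1`; `(x,2) ↦ m+1+(0 ⊕_s x)`; `∞ ↦ m`. -/
def skolemMap (m : ℕ) : Option (ℕ × ℕ) → ℕ
  | none => m
  | some p =>
    if p.2 = 0 then m - 1 - p.1
    else if p.2 = 1 then
      (if p.1 = m / 2 - 1 then 2 * m + 1 else 2 * m + 2 + skolemInv m p.1)
    else m + 1 + skolemOp m 0 p.1

/-- The block set of the Skolem Construction on the point set
`X' = {∞} ∪ {(x,i) : x ∈ {0,…,m-1}, i ∈ {0,1,2}}` (with `∞` encoded as `none`):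
Type 1 blocks `{(x,0),(x,1),(x,2)}` for `x ∈ {0,…,m/2-1}`;
Type 2 blocks `{(x,i),(y,i),(x ⊕_s y, (i+1) mod 3)}` for `0 ≤ x < y ≤ m-1`,
`i ∈ {0,1,2}`; Type 3 blocks `{∞,(x+m/2,i),(x,(i+1) mod 3)}` for
`x ∈ {0,…,m/2-1}`, `i ∈ {0,1,2}`. -/
def skolemBlocks (m : ℕ) : Finset (Finset (Option (ℕ × ℕ))) :=
  ((Finset.range (m / 2)).image fun x =>
    ({some (x, 0), some (x, 1), some (x, 2)} : Finset (Option (ℕ × ℕ)))) ∪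
  ((((Finset.range m ×ˢ Finset.range m).filter fun p => p.1 < p.2) ×ˢ Finset.range 3).image
    fun q => ({some (q.1.1, q.2), some (q.1.2, q.2),
      some (skolemOp m q.1.1 q.1.2, (q.2 + 1) % 3)} : Finset (Option (ℕ × ℕ)))) ∪
  ((Finset.range (m / 2) ×ˢ Finset.range 3).image
    fun q => ({none, some (q.1 + m / 2, q.2), some (q.1, (q.2 + 1) % 3)} :
      Finset (Option (ℕ × ℕ))))

lemma skolemOp_le (m x y : ℕ) (hm : 1 ≤ m) : skolemOp m x y ≤ m - 1 := by
  unfold skolemOp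
  have h : (x + y) % m < m := Nat.mod_lt _ hm
  split <;> omega

lemma map0_eq (m x : ℕ) : skolemMap m (some (x, 0)) = m - 1 - x := rfl

lemma map1_le (m x : ℕ) (hm : 2 ≤ m) (hme : m % 2 = 0) (hx : x < m) :
    skolemMap m (some (x, 1)) ≤ 3 * m := by
  have e : skolemMap m (some (x, 1))
      = if x = m / 2 - 1 then 2 * m + 1 else 2 * m + 2 + skolemInv m x := rfl
  rw [e]
  unfold skolemInv
  split_ifs <;> omega

lemma map2_le (m x : ℕ) (hm : 2 ≤ m) : skolemMap m (some (x, 2)) ≤ 2 * m := by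
  show m + 1 + skolemOp m 0 x ≤ 2 * m
  have := skolemOp_le m 0 x (by omega)
  omega

lemma map1_ne (m x y : ℕ) (hm : 2 ≤ m) (hme : m % 2 = 0) (hx : x < m) (hy : y < m)
    (hxy : x ≠ y) : skolemMap m (some (x, 1)) ≠ skolemMap m (some (y, 1)) := by
  have e1 : skolemMap m (some (x, 1))
      = if x = m / 2 - 1 then 2 * m + 1 else 2 * m + 2 + skolemInv m x := rfl
  have e2 : skolemMap m (some (y, 1))
      = if y = m / 2 - 1 then 2 * m + 1 else 2 * m + 2 + skolemInv m y := rfl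
  rw [e1, e2]
  unfold skolemInv
  split_ifs <;> omega

lemma sum_insert_le' {α : Type*} [DecidableEq α] (a : α) (s : Finset α) (f : α → ℕ) :
    ∑ x ∈ insert a s, f x ≤ f a + ∑ x ∈ s, f x := by
  by_cases h : a ∈ s
  · rw [Finset.insert_eq_self.mpr h]; exact Nat.le_add_left _ _
  · rw [Finset.sum_insert h]

lemma sum_triple_le {α : Type*} [DecidableEq α] (f : α → ℕ) (a b c : α) :
    ∑ x ∈ ({a, b, c} : Finset α).image f, x ≤ f a + f b + f c := by
  have hsub : ({a, b, c} : Finset α).image f ⊆ ({f a, f b, f c} : Finset ℕ) := by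
    intro z hz
    simp only [Finset.mem_image, Finset.mem_insert, Finset.mem_singleton] at hz ⊢
    obtain ⟨w, hw, rfl⟩ := hz
    rcases hw with rfl | rfl | rfl <;> simp
  refine le_trans (Finset.sum_le_sum_of_subset hsub) ?_
  refine le_trans (sum_insert_le' _ _ _) ?_
  have : ∑ x ∈ ({f b, f c} : Finset ℕ), (id x) ≤ f b + f c := by
    refine le_trans (sum_insert_le' _ _ _) ?_
    simp
  simp only [id] at this
  omega

lemma skolem_block_sum (m : ℕ) (hm : 2 ≤ m) (hme : m % 2 = 0) :
    ∀ b ∈ skolemBlocks m, ∑ x ∈ b.image (skolemMap m), x ≤ 8 * m - 1 := by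
  intro b hb
  unfold skolemBlocks at hb
  simp only [Finset.mem_union, Finset.mem_image, Finset.mem_range, Finset.mem_product,
    Finset.mem_filter] at hb
  rcases hb with (⟨x, hx, rfl⟩ | ⟨⟨⟨x, y⟩, i⟩, ⟨⟨⟨hx, hy⟩, hlt⟩, hi⟩, rfl⟩) | ⟨⟨x, i⟩, ⟨hx, hi⟩, rfl⟩
  · refine le_trans (sum_triple_le _ _ _ _) ?_
    have h1 := map1_le m x hm hme (by omega)
    have h2 := map2_le m x hm
    rw [map0_eq]
    omega
  · refine le_trans (sum_triple_le _ _ _ _) ?_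
    simp only at *
    have hop := skolemOp_le m x y (by omega)
    interval_cases i <;> norm_num
    · have h1 := map1_le m (skolemOp m x y) hm hme (by omega)
      rw [map0_eq, map0_eq]
      omega
    · have h1 := map1_le m x hm hme hx
      have h2 := map1_le m y hm hme hy
      have hne := map1_ne m x y hm hme hx hy (by omega)
      have h3 := map2_le m (skolemOp m x y) hm
      omega
    · have h1 := map2_le m x hm
      have h2 := map2_le m y hm
      rw [map0_eq]
      omega
  · refine le_trans (sum_triple_le _ _ _ _) ?_
    simp only at *
    have hinf : skolemMap m none = m := rfl
    interval_cases i <;> norm_num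
    · have h1 := map1_le m x hm hme (by omega)
      rw [hinf, map0_eq]
      omega
    · have h1 := map1_le m (x + m / 2) hm hme (by omega)
      have h2 := map2_le m x hm
      rw [hinf]
      omega
    · have h1 := map2_le m (x + m / 2) hm
      rw [hinf, map0_eq]
      omega

/-- For every `n ≥ 7` with `n ≡ 1 (mod 6)`, the Steiner triple system on
`{0,…,n-1}` obtained by applying the Skolem Mapping to the blocks of the Skolem
Construction has max-sum at most `(8n-11)/3`. -/
theorem skolem_sts_maxSum_le (n : ℕ) (hn : 7 ≤ n) (hmod : n % 6 = 1) :
    ∀ b ∈ (skolemBlocks ((n - 1) / 3)).image fun b => b.image (skolemMap ((n - 1) / 3)),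
      ∑ x ∈ b, x ≤ (8 * n - 11) / 3 := by
  intro b hb
  obtain ⟨b', hb', rfl⟩ := Finset.mem_image.mp hb
  have key := skolem_block_sum ((n - 1) / 3) (by omega) (by omega) b' hb'
  have : (8 * n - 11) / 3 = 8 * ((n - 1) / 3) - 1 := by omega
  omega
end

section
/- Let n = 3m ≥ 27 with m odd, and consider the Bose Construction with the Bose YXI-labeling, i.e., the block labeling given by ℓ(B_x) = m-1-x for each Type 1 block B_x, and ℓ(B_{x,y,i}) = m + i + 3x + 3y(y-1)/2 for each Type 2 block B_{x,y,i}. Then the minimum over all points (z,i) of the sum of labels of blocks containing (z,i) equals (55/1728)n³ + (1/192)n² - (9/64)n - 31/64 when m ≡ 1 (mod 4) (and n ≥ 27), and equals (55/1728)n³ + (1/192)n² - (13/64)n + 13/64 when m ≡ 3 (mod 4) (and n ≥ 33). -/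
/-- The Bose operation on `{0,1,…,m-1}` (for `m` odd):
`x ⊕_b y = ((m+1)/2)(x+y) mod m`. -/
def boseOp (m x y : ℕ) : ℕ := ((m + 1) / 2 * (x + y)) % m

/-- The block set of the Bose Construction on the point set
`X' = {(x,i) : x ∈ {0,…,m-1}, i ∈ {0,1,2}}`:
Type 1 blocks `B_x = {(x,0),(x,1),(x,2)}` for `x ∈ {0,…,m-1}`, and Type 2
blocks `B_{x,y,i} = {(x,i),(y,i),(x ⊕_b y, (i+1) mod 3)}` for
`0 ≤ x < y ≤ m-1`, `i ∈ {0,1,2}`. -/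
def boseBlocks (m : ℕ) : Finset (Finset (ℕ × ℕ)) :=
  ((Finset.range m).image fun x => ({(x, 0), (x, 1), (x, 2)} : Finset (ℕ × ℕ))) ∪
  ((((Finset.range m ×ˢ Finset.range m).filter fun p => p.1 < p.2) ×ˢ Finset.range 3).image
    fun q => ({(q.1.1, q.2), (q.1.2, q.2), (boseOp m q.1.1 q.1.2, (q.2 + 1) % 3)} :
      Finset (ℕ × ℕ)))

/-- The dual sum of the point `(z,i)`: the sum of the labels `ℓ(B)` over all
blocks `B` of the Bose Construction containing `(z,i)`. -/
def boseDualSum (m : ℕ) (ℓ : Finset (ℕ × ℕ) → ℕ) (z i : ℕ) : ℕ :=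
  ∑ b ∈ (boseBlocks m).filter fun b => (z, i) ∈ b, ℓ b


open Finset

namespace BoseAux

lemma sum_quad (a b c : ℚ) (k : ℕ) :
    ∑ x ∈ range k, (a + b * (x : ℚ) + c * (x : ℚ) ^ 2)
      = k * a + b * ((k : ℚ) ^ 2 - k) / 2 + c * (2 * (k : ℚ) ^ 3 - 3 * (k : ℚ) ^ 2 + k) / 6 := by
  induction k with
  | zero => simp
  | succ n ih => rw [Finset.sum_range_succ, ih]; push_cast; ring

lemma sum_quad_Ico (a b c : ℚ) (u v : ℕ) (h : u ≤ v) :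
    ∑ x ∈ Ico u v, (a + b * (x : ℚ) + c * (x : ℚ) ^ 2)
      = (v * a + b * ((v : ℚ) ^ 2 - v) / 2 + c * (2 * (v : ℚ) ^ 3 - 3 * (v : ℚ) ^ 2 + v) / 6)
        - (u * a + b * ((u : ℚ) ^ 2 - u) / 2 + c * (2 * (u : ℚ) ^ 3 - 3 * (u : ℚ) ^ 2 + u) / 6) := by
  rw [Finset.sum_Ico_eq_sub _ h, sum_quad, sum_quad]

lemma cast_label (m x y i : ℕ) :
    ((m + i + 3 * x + 3 * (y * (y - 1)) / 2 : ℕ) : ℚ)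
      = m + i + 3 * x + 3 * ((y : ℚ) ^ 2 - y) / 2 := by
  match y with
  | 0 => norm_num
  | (w+1) =>
    obtain ⟨c, hc⟩ : 2 ∣ (w+1) * (w+1-1) := by
      simpa [Nat.add_sub_cancel, Nat.mul_comm] using (Nat.even_mul_succ_self w).two_dvd
    rw [hc]
    have h1 : 3 * (2 * c) / 2 = 3 * c := by omega
    rw [h1]
    have hcq : ((w:ℚ)+1) * w = 2 * c := by
      have : ((w+1) * (w+1-1) : ℕ) = ((2 * c : ℕ)) := hc
      have := congrArg (Nat.cast (R := ℚ)) this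
      push_cast [Nat.add_sub_cancel] at this
      linarith [this]
    push_cast
    linear_combination (-3/2) * hcq

lemma cast_tri (y : ℕ) :
    ((3 * (y * (y - 1)) / 2 : ℕ) : ℚ) = 3 * ((y : ℚ) ^ 2 - y) / 2 := by
  have h := cast_label 0 0 y 0
  push_cast at h
  linarith [h]

lemma mod_eq_iff {s t m : ℕ} (ht : t < m) (hs : s < 2 * m) : s % m = t ↔ s = t ∨ s = t + m := by
  have h1 : s % m + m * (s / m) = s := Nat.mod_add_div s m
  have h2 : s % m < m := Nat.mod_lt _ (by omega)
  have h3 : s / m = 0 ∨ s / m = 1 := by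
    rcases Nat.lt_or_ge s m with h | h
    · left; exact Nat.div_eq_of_lt h
    · right
      have := Nat.div_lt_of_lt_mul (by omega : s < m * 2)
      have := Nat.one_le_div_iff (by omega : 0 < m) |>.2 h
      omega
  rcases h3 with h | h <;> rw [h] at h1 <;> omega

lemma boseOp_eq_iff {m : ℕ} (hm : Odd m) (x y z : ℕ) (hz : z < m) :
    boseOp m x y = z ↔ (x + y) % m = (2 * z) % m := by
  obtain ⟨t, ht⟩ := hm
  subst ht
  set m := 2 * t + 1 with hm'
  have hh : (m + 1) / 2 = t + 1 := by omega
  have h1 : m + 1 ≡ 1 [MOD m] := Nat.add_mod_left m 1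
  unfold boseOp
  constructor
  · intro h
    have h2 : (m + 1) / 2 * (x + y) ≡ z [MOD m] := by
      unfold Nat.ModEq; rw [h, Nat.mod_eq_of_lt hz]
    have key : x + y ≡ 2 * z [MOD m] :=
      calc x + y = 1 * (x + y) := (one_mul _).symm
        _ ≡ (m + 1) * (x + y) [MOD m] := (h1.mul_right _).symm
        _ = 2 * ((m + 1) / 2 * (x + y)) := by rw [hh, hm']; ring
        _ ≡ 2 * z [MOD m] := h2.mul_left 2
    exact key
  · intro h
    have h2 : (m + 1) / 2 * (x + y) ≡ (m + 1) / 2 * (2 * z) [MOD m] :=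
      Nat.ModEq.mul_left _ h
    have h3 : (m + 1) / 2 * (2 * z) = (m + 1) * z := by rw [hh, hm']; ring
    have h4 : (m + 1) * z ≡ 1 * z [MOD m] := h1.mul_right z
    have h5 : (m + 1) / 2 * (x + y) ≡ z [MOD m] := by
      have := (h2.trans (h3 ▸ h4))
      simpa using this
    unfold Nat.ModEq at h5
    rw [h5, Nat.mod_eq_of_lt hz]


def f1 (x : ℕ) : Finset (ℕ × ℕ) := {(x,0),(x,1),(x,2)}

def f2 (m : ℕ) (q : (ℕ × ℕ) × ℕ) : Finset (ℕ × ℕ) :=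
  {(q.1.1, q.2), (q.1.2, q.2), (boseOp m q.1.1 q.1.2, (q.2+1)%3)}

def idx2 (m : ℕ) : Finset ((ℕ × ℕ) × ℕ) :=
  ((range m ×ˢ range m).filter fun p => p.1 < p.2) ×ˢ range 3

lemma mem_idx2 {m : ℕ} {q : (ℕ × ℕ) × ℕ} :
    q ∈ idx2 m ↔ q.1.1 < q.1.2 ∧ q.1.2 < m ∧ q.2 < 3 := by
  simp only [idx2, mem_product, mem_filter, mem_range]
  omega

lemma f1_inj : Function.Injective f1 := by
  intro a b h
  have : (a, 0) ∈ f1 b := h ▸ (by simp [f1])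
  simp [f1, Prod.ext_iff] at this
  omega

lemma f2_injOn (m : ℕ) : Set.InjOn (f2 m) (idx2 m) := by
  rintro ⟨⟨x, y⟩, j⟩ hq ⟨⟨x', y'⟩, j'⟩ hq' h
  rw [Finset.mem_coe, mem_idx2] at hq hq'
  simp only at hq hq'
  have h1 : ((x, j) : ℕ × ℕ) ∈ f2 m ((x', y'), j') := h ▸ (by simp [f2])
  have h2 : ((y, j) : ℕ × ℕ) ∈ f2 m ((x', y'), j') := h ▸ (by simp [f2])
  have h3 : ((x', j') : ℕ × ℕ) ∈ f2 m ((x, y), j) := h ▸ (by simp [f2])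
  have h4 : ((y', j') : ℕ × ℕ) ∈ f2 m ((x, y), j) := h ▸ (by simp [f2])
  simp only [f2, mem_insert, mem_singleton, Prod.mk.injEq] at h1 h2 h3 h4
  have : x = x' ∧ y = y' ∧ j = j' := by omega
  simp [this.1, this.2.1, this.2.2]

lemma boseBlocks_eq (m : ℕ) :
    boseBlocks m = (range m).image f1 ∪ (idx2 m).image (f2 m) := rfl

lemma disj_blocks (m : ℕ) : Disjoint ((range m).image f1) ((idx2 m).image (f2 m)) := by
  rw [Finset.disjoint_left]
  rintro b hb1 hb2
  obtain ⟨x, -, rfl⟩ := mem_image.1 hb1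
  obtain ⟨q, hq, hfeq⟩ := mem_image.1 hb2
  rw [mem_idx2] at hq
  have h0 : ((x, 0) : ℕ × ℕ) ∈ f2 m q := hfeq ▸ (by simp [f1])
  have h1 : ((x, 1) : ℕ × ℕ) ∈ f2 m q := hfeq ▸ (by simp [f1])
  have h2 : ((x, 2) : ℕ × ℕ) ∈ f2 m q := hfeq ▸ (by simp [f1])
  simp only [f2, mem_insert, mem_singleton, Prod.mk.injEq] at h0 h1 h2
  omega

lemma dualSum_decomp (m z i : ℕ) (ℓ : Finset (ℕ × ℕ) → ℕ) (hz : z < m) (hi : i < 3) :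
    boseDualSum m ℓ z i
      = ℓ (f1 z)
        + ((∑ y ∈ Ico (z+1) m, ℓ (f2 m ((z, y), i)))
        + (∑ x ∈ range z, ℓ (f2 m ((x, z), i)))
        + (∑ q ∈ (idx2 m).filter
            (fun q => z = boseOp m q.1.1 q.1.2 ∧ i = (q.2+1)%3), ℓ (f2 m q))) := by
  have hT1set : (range m).filter (fun x => (z, i) ∈ f1 x) = {z} := by
    ext a
    simp only [mem_filter, mem_range, f1, mem_insert, mem_singleton, Prod.mk.injEq]
    omega
  have hcong : (idx2 m).filter (fun q => (z, i) ∈ f2 m q)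
      = (idx2 m).filter (fun q => (z = q.1.1 ∧ i = q.2) ∨ ((z = q.1.2 ∧ i = q.2) ∨
          (z = boseOp m q.1.1 q.1.2 ∧ i = (q.2+1)%3))) := by
    apply filter_congr
    rintro ⟨⟨x, y⟩, j⟩ _
    simp [f2, Prod.ext_iff]
  have hsetA : (idx2 m).filter (fun q => z = q.1.1 ∧ i = q.2)
      = (Ico (z+1) m).image (fun y => ((z, y), i)) := by
    ext ⟨⟨x, y⟩, j⟩
    simp only [mem_filter, mem_idx2, mem_image, mem_Ico, Prod.mk.injEq]
    constructor
    · rintro ⟨⟨h1, h2, h3⟩, rfl, rfl⟩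
      exact ⟨y, ⟨by omega, by omega⟩, ⟨rfl, rfl⟩, rfl⟩
    · rintro ⟨a, ⟨ha1, ha2⟩, ⟨rfl, rfl⟩, rfl⟩
      exact ⟨⟨by omega, by omega, hi⟩, rfl, rfl⟩
  have hsetB : (idx2 m).filter (fun q => z = q.1.2 ∧ i = q.2)
      = (range z).image (fun x => ((x, z), i)) := by
    ext ⟨⟨x, y⟩, j⟩
    simp only [mem_filter, mem_idx2, mem_image, mem_range, Prod.mk.injEq]
    constructor
    · rintro ⟨⟨h1, h2, h3⟩, rfl, rfl⟩
      exact ⟨x, by omega, ⟨rfl, rfl⟩, rfl⟩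
    · rintro ⟨a, ha, ⟨rfl, rfl⟩, rfl⟩
      exact ⟨⟨by omega, by omega, hi⟩, rfl, rfl⟩
  have d1 : Disjoint ((idx2 m).filter (fun q => z = q.1.1 ∧ i = q.2))
      ((idx2 m).filter (fun q => (z = q.1.2 ∧ i = q.2) ∨
        (z = boseOp m q.1.1 q.1.2 ∧ i = (q.2+1)%3))) := by
    rw [Finset.disjoint_filter]
    rintro ⟨⟨x, y⟩, j⟩ hq ⟨h1, h2⟩ h3
    rw [mem_idx2] at hq
    rcases h3 with ⟨h4, h5⟩ | ⟨h4, h5⟩ <;> omega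
  have d2 : Disjoint ((idx2 m).filter (fun q => z = q.1.2 ∧ i = q.2))
      ((idx2 m).filter (fun q => z = boseOp m q.1.1 q.1.2 ∧ i = (q.2+1)%3)) := by
    rw [Finset.disjoint_filter]
    rintro ⟨⟨x, y⟩, j⟩ hq ⟨h1, h2⟩ ⟨h3, h4⟩
    rw [mem_idx2] at hq
    omega
  unfold boseDualSum
  rw [boseBlocks_eq, filter_union,
    Finset.sum_union (Finset.disjoint_filter_filter (disj_blocks m)),
    Finset.filter_image, Finset.filter_image,
    Finset.sum_image (fun a _ b _ h => f1_inj h),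
    Finset.sum_image (fun a ha b hb h => f2_injOn m (Finset.mem_coe.2 (mem_filter.1 ha).1)
      (Finset.mem_coe.2 (mem_filter.1 hb).1) h),
    hT1set, Finset.sum_singleton, hcong, filter_or, Finset.sum_union d1, filter_or,
    Finset.sum_union d2, hsetA, hsetB,
    Finset.sum_image (show ∀ a ∈ Ico (z+1) m, ∀ b ∈ Ico (z+1) m,
      ((z, a), i) = ((z, b), i) → a = b by intro a _ b _ h; simpa using h),
    Finset.sum_image (show ∀ a ∈ range z, ∀ b ∈ range z,
      ((a, z), i) = ((b, z), i) → a = b by intro a _ b _ h; simpa using h)]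
  ring

lemma mod_eq_iff2 {a b m : ℕ} (hm : 0 < m) (ha : a < 2 * m) (hb : b < 2 * m) :
    a % m = b % m ↔ (a = b ∨ a = b + m ∨ b = a + m) := by
  have h1 : a % m + m * (a / m) = a := Nat.mod_add_div a m
  have h2 : b % m + m * (b / m) = b := Nat.mod_add_div b m
  have h3 : a % m < m := Nat.mod_lt _ hm
  have h4 : b % m < m := Nat.mod_lt _ hm
  have h5 : a / m = 0 ∨ a / m = 1 := by
    rcases Nat.lt_or_ge a m with h | h
    · left; exact Nat.div_eq_of_lt h
    · right
      have := Nat.div_lt_of_lt_mul (by omega : a < m * 2)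
      have := Nat.one_le_div_iff hm |>.2 h
      omega
  have h6 : b / m = 0 ∨ b / m = 1 := by
    rcases Nat.lt_or_ge b m with h | h
    · left; exact Nat.div_eq_of_lt h
    · right
      have := Nat.div_lt_of_lt_mul (by omega : b < m * 2)
      have := Nat.one_le_div_iff hm |>.2 h
      omega
  rcases h5 with h | h <;> rcases h6 with h' | h' <;>
    rw [h] at h1 <;> rw [h'] at h2 <;> omega

lemma boseOp_cond {m x y z : ℕ} (hm : Odd m) (hz : z < m) (hx : x < m) (hy : y < m) :
    z = boseOp m x y ↔ (x + y = 2 * z ∨ x + y = 2 * z + m ∨ 2 * z = x + y + m) := by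
  rw [eq_comm, boseOp_eq_iff hm x y z hz,
    mod_eq_iff2 (by omega) (by omega) (by omega)]

lemma Sc_lo {m z i : ℕ} (hm : Odd m) (hz : z < m) (h2z : 2 * z < m) (hi : i < 3) :
    (idx2 m).filter (fun q => z = boseOp m q.1.1 q.1.2 ∧ i = (q.2+1)%3)
      = ((range z).image fun x => (((x, 2*z - x), (i+2)%3) : (ℕ × ℕ) × ℕ))
        ∪ ((Ico (2*z+1) (z + (m+1)/2)).image
            fun x => (((x, 2*z + m - x), (i+2)%3) : (ℕ × ℕ) × ℕ)) := by
  obtain ⟨t, ht⟩ := hm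
  ext ⟨⟨x, y⟩, j⟩
  simp only [mem_filter, mem_idx2, mem_union, mem_image, mem_range, mem_Ico, Prod.mk.injEq]
  constructor
  · rintro ⟨⟨h1, h2, h3⟩, hop, hji⟩
    rw [boseOp_cond (by exact ⟨t, ht⟩) hz (by omega) h2] at hop
    rcases hop with h | h | h
    · exact Or.inl ⟨x, by omega, ⟨rfl, by omega⟩, by omega⟩
    · exact Or.inr ⟨x, by omega, ⟨rfl, by omega⟩, by omega⟩
    · omega
  · rintro (⟨a, ha, ⟨rfl, rfl⟩, rfl⟩ | ⟨a, ha, ⟨rfl, rfl⟩, rfl⟩)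
    · refine ⟨⟨by omega, by omega, by omega⟩, ?_, by omega⟩
      rw [boseOp_cond (by exact ⟨t, ht⟩) hz (by omega) (by omega)]
      omega
    · refine ⟨⟨by omega, by omega, by omega⟩, ?_, by omega⟩
      rw [boseOp_cond (by exact ⟨t, ht⟩) hz (by omega) (by omega)]
      omega

lemma Sc_hi {m z i : ℕ} (hm : Odd m) (hz : z < m) (h2z : m ≤ 2 * z) (hi : i < 3) :
    (idx2 m).filter (fun q => z = boseOp m q.1.1 q.1.2 ∧ i = (q.2+1)%3)
      = ((range (z + 1 - (m+1)/2)).image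
            fun x => (((x, 2*z - m - x), (i+2)%3) : (ℕ × ℕ) × ℕ))
        ∪ ((Ico (2*z - m + 1) z).image
            fun x => (((x, 2*z - x), (i+2)%3) : (ℕ × ℕ) × ℕ)) := by
  obtain ⟨t, ht⟩ := hm
  ext ⟨⟨x, y⟩, j⟩
  simp only [mem_filter, mem_idx2, mem_union, mem_image, mem_range, mem_Ico, Prod.mk.injEq]
  constructor
  · rintro ⟨⟨h1, h2, h3⟩, hop, hji⟩
    rw [boseOp_cond (by exact ⟨t, ht⟩) hz (by omega) h2] at hop
    rcases hop with h | h | h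
    · exact Or.inr ⟨x, by omega, ⟨rfl, by omega⟩, by omega⟩
    · omega
    · exact Or.inl ⟨x, by omega, ⟨rfl, by omega⟩, by omega⟩
  · rintro (⟨a, ha, ⟨rfl, rfl⟩, rfl⟩ | ⟨a, ha, ⟨rfl, rfl⟩, rfl⟩)
    · refine ⟨⟨by omega, by omega, by omega⟩, ?_, by omega⟩
      rw [boseOp_cond (by exact ⟨t, ht⟩) hz (by omega) (by omega)]
      omega
    · refine ⟨⟨by omega, by omega, by omega⟩, ?_, by omega⟩
      rw [boseOp_cond (by exact ⟨t, ht⟩) hz (by omega) (by omega)]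
      omega

lemma dualSum_lo {m z i : ℕ} (hm : Odd m) (h2z : 2 * z < m) (hi : i < 3)
    (ℓ : Finset (ℕ × ℕ) → ℕ)
    (hT1 : ∀ x < m, ℓ ({(x, 0), (x, 1), (x, 2)} : Finset (ℕ × ℕ)) = m - 1 - x)
    (hT2 : ∀ x y i : ℕ, x < y → y < m → i < 3 →
      ℓ ({(x, i), (y, i), (boseOp m x y, (i + 1) % 3)} : Finset (ℕ × ℕ)) =
        m + i + 3 * x + 3 * (y * (y - 1)) / 2) :
    ((boseDualSum m ℓ z i : ℕ) : ℚ)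
      = (64*(z:ℚ)^3 - (12*(m:ℚ)+84)*(z:ℚ)^2 + (-6*(m:ℚ)^2+84*(m:ℚ)-158)*(z:ℚ)
          + 15*(m:ℚ)^3-15*(m:ℚ)^2+25*(m:ℚ)-25)/16
        + ((m:ℚ)-1)*(i:ℚ) + (((i+2)%3 : ℕ) : ℚ)*((m:ℚ)-1)/2 := by
  obtain ⟨t, ht⟩ := hm
  set j : ℕ := (i+2)%3 with hj
  have hz : z < m := by omega
  have hdisj : Disjoint
      ((range z).image fun x => (((x, 2*z - x), j) : (ℕ × ℕ) × ℕ))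
      ((Ico (2*z+1) (z + (m+1)/2)).image
          fun x => (((x, 2*z + m - x), j) : (ℕ × ℕ) × ℕ)) := by
    rw [Finset.disjoint_left]
    rintro q hq1 hq2
    obtain ⟨a, ha, rfl⟩ := mem_image.1 hq1
    obtain ⟨b, hb, hbeq⟩ := mem_image.1 hq2
    simp only [Prod.mk.injEq] at hbeq
    simp only [mem_range] at ha
    simp only [mem_Ico] at hb
    omega
  rw [dualSum_decomp m z i ℓ hz hi, Sc_lo ⟨t, ht⟩ hz h2z hi,
    Finset.sum_union hdisj,
    Finset.sum_image (show ∀ a ∈ range z, ∀ b ∈ range z,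
      (((a, 2*z - a), j) : (ℕ × ℕ) × ℕ) = ((b, 2*z - b), j) → a = b by
        intro a _ b _ h; exact congrArg (fun p => p.1.1) h),
    Finset.sum_image (show ∀ a ∈ Ico (2*z+1) (z + (m+1)/2), ∀ b ∈ Ico (2*z+1) (z + (m+1)/2),
      (((a, 2*z + m - a), j) : (ℕ × ℕ) × ℕ) = ((b, 2*z + m - b), j) → a = b by
        intro a _ b _ h; exact congrArg (fun p => p.1.1) h)]
  have eA : ∑ y ∈ Ico (z+1) m, ℓ (f2 m ((z, y), i))
      = ∑ y ∈ Ico (z+1) m, (m + i + 3 * z + 3 * (y * (y - 1)) / 2) :=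
    Finset.sum_congr rfl fun y hy => by
      rw [mem_Ico] at hy
      exact hT2 z y i (by omega) (by omega) hi
  have eB : ∑ x ∈ range z, ℓ (f2 m ((x, z), i))
      = ∑ x ∈ range z, (m + i + 3 * x + 3 * (z * (z - 1)) / 2) :=
    Finset.sum_congr rfl fun x hx => by
      rw [mem_range] at hx
      exact hT2 x z i (by omega) (by omega) hi
  have eC : ∑ x ∈ range z, ℓ (f2 m ((x, 2*z - x), j))
      = ∑ x ∈ range z, (m + j + 3 * x + 3 * ((2*z-x) * ((2*z-x) - 1)) / 2) :=
    Finset.sum_congr rfl fun x hx => by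
      rw [mem_range] at hx
      exact hT2 x (2*z-x) j (by omega) (by omega) (by omega)
  have eD : ∑ x ∈ Ico (2*z+1) (z + (m+1)/2), ℓ (f2 m ((x, 2*z + m - x), j))
      = ∑ x ∈ Ico (2*z+1) (z + (m+1)/2),
          (m + j + 3 * x + 3 * ((2*z+m-x) * ((2*z+m-x) - 1)) / 2) :=
    Finset.sum_congr rfl fun x hx => by
      rw [mem_Ico] at hx
      exact hT2 x (2*z+m-x) j (by omega) (by omega) (by omega)
  have eT1 : ℓ (f1 z) = m - 1 - z := hT1 z hz
  rw [eA, eB, eC, eD, eT1]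
  push_cast
  have cT1 : ((m - 1 - z : ℕ) : ℚ) = (m:ℚ) - 1 - z := by
    rw [Nat.cast_sub (by omega), Nat.cast_sub (by omega)]
    norm_num
  rw [cT1]
  simp only [cast_tri]
  have cA : ∑ y ∈ Ico (z+1) m, ((m:ℚ) + (i:ℚ) + 3*(z:ℚ) + 3 * ((y:ℚ)^2 - y) / 2)
      = ∑ y ∈ Ico (z+1) m, (((m:ℚ) + i + 3*z) + (-3/2) * (y:ℚ) + (3/2) * (y:ℚ)^2) :=
    Finset.sum_congr rfl fun y _ => by ring
  have cB : ∑ x ∈ range z, ((m:ℚ) + (i:ℚ) + 3*(x:ℚ) + 3 * ((z:ℚ)^2 - z) / 2)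
      = ∑ x ∈ range z, (((m:ℚ) + i + 3*((z:ℚ)^2 - z)/2) + 3 * (x:ℚ) + 0 * (x:ℚ)^2) :=
    Finset.sum_congr rfl fun x _ => by ring
  have cC : ∑ x ∈ range z,
        ((m:ℚ) + (j:ℚ) + 3*(x:ℚ) + 3 * (((2*z-x : ℕ):ℚ)^2 - ((2*z-x : ℕ):ℚ)) / 2)
      = ∑ x ∈ range z, (((m:ℚ) + j + 6*(z:ℚ)^2 - 3*z) + (9/2 - 6*(z:ℚ)) * (x:ℚ)
          + (3/2) * (x:ℚ)^2) :=
    Finset.sum_congr rfl fun x hx => by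
      rw [mem_range] at hx
      rw [Nat.cast_sub (by omega : x ≤ 2*z)]
      push_cast
      ring
  have cD : ∑ x ∈ Ico (2*z+1) (z + (m+1)/2),
        ((m:ℚ) + (j:ℚ) + 3*(x:ℚ) + 3 * (((2*z+m-x : ℕ):ℚ)^2 - ((2*z+m-x : ℕ):ℚ)) / 2)
      = ∑ x ∈ Ico (2*z+1) (z + (m+1)/2),
          (((m:ℚ) + j + 3*((2*(z:ℚ)+m)^2 - (2*(z:ℚ)+m))/2)
            + (9/2 - 3*(2*(z:ℚ)+(m:ℚ))) * (x:ℚ) + (3/2) * (x:ℚ)^2) :=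
    Finset.sum_congr rfl fun x hx => by
      rw [mem_Ico] at hx
      rw [Nat.cast_sub (by omega : x ≤ 2*z+m)]
      push_cast
      ring
  rw [cA, cB, cC, cD, sum_quad_Ico _ _ _ _ _ (by omega : z+1 ≤ m),
    sum_quad, sum_quad, sum_quad_Ico _ _ _ _ _ (by omega : 2*z+1 ≤ z + (m+1)/2)]
  have hv : ((z + (m+1)/2 : ℕ) : ℚ) = (z:ℚ) + t + 1 := by
    have h0 : z + (m+1)/2 = z + t + 1 := by omega
    rw [h0]; push_cast; ring
  have hmq : (m : ℚ) = 2*(t:ℚ) + 1 := by rw [ht]; push_cast; ring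
  rw [hv, hmq]
  push_cast
  ring

lemma dualSum_hi {m z i : ℕ} (hm : Odd m) (h2z : m ≤ 2 * z) (hz : z < m) (hi : i < 3)
    (ℓ : Finset (ℕ × ℕ) → ℕ)
    (hT1 : ∀ x < m, ℓ ({(x, 0), (x, 1), (x, 2)} : Finset (ℕ × ℕ)) = m - 1 - x)
    (hT2 : ∀ x y i : ℕ, x < y → y < m → i < 3 →
      ℓ ({(x, i), (y, i), (boseOp m x y, (i + 1) % 3)} : Finset (ℕ × ℕ)) =
        m + i + 3 * x + 3 * (y * (y - 1)) / 2) :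
    ((boseDualSum m ℓ z i : ℕ) : ℚ)
      = (64*(z:ℚ)^3 - (84*(m:ℚ)+84)*(z:ℚ)^2 + (42*(m:ℚ)^2+108*(m:ℚ)-158)*(z:ℚ)
          + 9*(m:ℚ)^3-39*(m:ℚ)^2+55*(m:ℚ)-25)/16
        + ((m:ℚ)-1)*(i:ℚ) + (((i+2)%3 : ℕ) : ℚ)*((m:ℚ)-1)/2 := by
  obtain ⟨t, ht⟩ := hm
  set j : ℕ := (i+2)%3 with hj
  have hdisj : Disjoint
      ((range (z + 1 - (m+1)/2)).image fun x => (((x, 2*z - m - x), j) : (ℕ × ℕ) × ℕ))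
      ((Ico (2*z - m + 1) z).image
          fun x => (((x, 2*z - x), j) : (ℕ × ℕ) × ℕ)) := by
    rw [Finset.disjoint_left]
    rintro q hq1 hq2
    obtain ⟨a, ha, rfl⟩ := mem_image.1 hq1
    obtain ⟨b, hb, hbeq⟩ := mem_image.1 hq2
    simp only [Prod.mk.injEq] at hbeq
    simp only [mem_range] at ha
    simp only [mem_Ico] at hb
    omega
  rw [dualSum_decomp m z i ℓ hz hi, Sc_hi ⟨t, ht⟩ hz h2z hi,
    Finset.sum_union hdisj,
    Finset.sum_image (show ∀ a ∈ range (z + 1 - (m+1)/2), ∀ b ∈ range (z + 1 - (m+1)/2),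
      (((a, 2*z - m - a), j) : (ℕ × ℕ) × ℕ) = ((b, 2*z - m - b), j) → a = b by
        intro a _ b _ h; exact congrArg (fun p => p.1.1) h),
    Finset.sum_image (show ∀ a ∈ Ico (2*z - m + 1) z, ∀ b ∈ Ico (2*z - m + 1) z,
      (((a, 2*z - a), j) : (ℕ × ℕ) × ℕ) = ((b, 2*z - b), j) → a = b by
        intro a _ b _ h; exact congrArg (fun p => p.1.1) h)]
  have eA : ∑ y ∈ Ico (z+1) m, ℓ (f2 m ((z, y), i))
      = ∑ y ∈ Ico (z+1) m, (m + i + 3 * z + 3 * (y * (y - 1)) / 2) :=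
    Finset.sum_congr rfl fun y hy => by
      rw [mem_Ico] at hy
      exact hT2 z y i (by omega) (by omega) hi
  have eB : ∑ x ∈ range z, ℓ (f2 m ((x, z), i))
      = ∑ x ∈ range z, (m + i + 3 * x + 3 * (z * (z - 1)) / 2) :=
    Finset.sum_congr rfl fun x hx => by
      rw [mem_range] at hx
      exact hT2 x z i (by omega) (by omega) hi
  have eC : ∑ x ∈ range (z + 1 - (m+1)/2), ℓ (f2 m ((x, 2*z - m - x), j))
      = ∑ x ∈ range (z + 1 - (m+1)/2),
          (m + j + 3 * x + 3 * ((2*z-m-x) * ((2*z-m-x) - 1)) / 2) :=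
    Finset.sum_congr rfl fun x hx => by
      rw [mem_range] at hx
      exact hT2 x (2*z-m-x) j (by omega) (by omega) (by omega)
  have eD : ∑ x ∈ Ico (2*z - m + 1) z, ℓ (f2 m ((x, 2*z - x), j))
      = ∑ x ∈ Ico (2*z - m + 1) z,
          (m + j + 3 * x + 3 * ((2*z-x) * ((2*z-x) - 1)) / 2) :=
    Finset.sum_congr rfl fun x hx => by
      rw [mem_Ico] at hx
      exact hT2 x (2*z-x) j (by omega) (by omega) (by omega)
  have eT1 : ℓ (f1 z) = m - 1 - z := hT1 z hz
  rw [eA, eB, eC, eD, eT1]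
  push_cast
  have cT1 : ((m - 1 - z : ℕ) : ℚ) = (m:ℚ) - 1 - z := by
    rw [Nat.cast_sub (by omega), Nat.cast_sub (by omega)]
    norm_num
  rw [cT1]
  simp only [cast_tri]
  have cA : ∑ y ∈ Ico (z+1) m, ((m:ℚ) + (i:ℚ) + 3*(z:ℚ) + 3 * ((y:ℚ)^2 - y) / 2)
      = ∑ y ∈ Ico (z+1) m, (((m:ℚ) + i + 3*z) + (-3/2) * (y:ℚ) + (3/2) * (y:ℚ)^2) :=
    Finset.sum_congr rfl fun y _ => by ring
  have cB : ∑ x ∈ range z, ((m:ℚ) + (i:ℚ) + 3*(x:ℚ) + 3 * ((z:ℚ)^2 - z) / 2)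
      = ∑ x ∈ range z, (((m:ℚ) + i + 3*((z:ℚ)^2 - z)/2) + 3 * (x:ℚ) + 0 * (x:ℚ)^2) :=
    Finset.sum_congr rfl fun x _ => by ring
  have cC : ∑ x ∈ range (z + 1 - (m+1)/2),
        ((m:ℚ) + (j:ℚ) + 3*(x:ℚ) + 3 * (((2*z-m-x : ℕ):ℚ)^2 - ((2*z-m-x : ℕ):ℚ)) / 2)
      = ∑ x ∈ range (z + 1 - (m+1)/2),
          (((m:ℚ) + j + 3*((2*(z:ℚ)-m)^2 - (2*(z:ℚ)-m))/2)
            + (9/2 - 3*(2*(z:ℚ)-(m:ℚ))) * (x:ℚ) + (3/2) * (x:ℚ)^2) :=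
    Finset.sum_congr rfl fun x hx => by
      rw [mem_range] at hx
      rw [show (2*z-m-x : ℕ) = (2*z-m)-x from rfl, Nat.cast_sub (by omega : x ≤ 2*z-m),
        Nat.cast_sub (by omega : m ≤ 2*z)]
      push_cast
      ring
  have cD : ∑ x ∈ Ico (2*z - m + 1) z,
        ((m:ℚ) + (j:ℚ) + 3*(x:ℚ) + 3 * (((2*z-x : ℕ):ℚ)^2 - ((2*z-x : ℕ):ℚ)) / 2)
      = ∑ x ∈ Ico (2*z - m + 1) z,
          (((m:ℚ) + j + 6*(z:ℚ)^2 - 3*z) + (9/2 - 6*(z:ℚ)) * (x:ℚ) + (3/2) * (x:ℚ)^2) :=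
    Finset.sum_congr rfl fun x hx => by
      rw [mem_Ico] at hx
      rw [Nat.cast_sub (by omega : x ≤ 2*z)]
      push_cast
      ring
  rw [cA, cB, cC, cD, sum_quad_Ico _ _ _ _ _ (by omega : z+1 ≤ m),
    sum_quad, sum_quad, sum_quad_Ico _ _ _ _ _ (by omega : 2*z - m + 1 ≤ z)]
  have hv : ((z + 1 - (m+1)/2 : ℕ) : ℚ) = (z:ℚ) - t := by
    have h0 : z + 1 - (m+1)/2 = z - t := by omega
    rw [h0, Nat.cast_sub (by omega : t ≤ z)]
  have hu : ((2*z - m + 1 : ℕ) : ℚ) = 2*(z:ℚ) - m + 1 := by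
    rw [show (2*z - m + 1 : ℕ) = 2*z - m + 1 from rfl]
    push_cast [Nat.cast_sub (by omega : m ≤ 2*z)]
    ring
  have hmq : (m : ℚ) = 2*(t:ℚ) + 1 := by rw [ht]; push_cast; ring
  rw [hv, hu, hmq]
  push_cast
  ring
end BoseAux


set_option maxHeartbeats 2000000 in
/-- For `n = 3m ≥ 27` with `m` odd, the Bose Construction with the Bose
YXI-labeling `ℓ(B_x) = m-1-x`, `ℓ(B_{x,y,i}) = m + i + 3x + 3y(y-1)/2` has
dual min-sum (the minimum over points `(z,i)` of the sum of the labels of the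
blocks containing `(z,i)`) equal to
`(55/1728)n³ + (1/192)n² - (9/64)n - 31/64` when `m ≡ 1 (mod 4)` (and `n ≥ 27`),
and to `(55/1728)n³ + (1/192)n² - (13/64)n + 13/64` when `m ≡ 3 (mod 4)`
(and `n ≥ 33`). -/
theorem bose_YXI_dual_minSum (n m : ℕ) (hm : Odd m) (hn : n = 3 * m) (hn27 : 27 ≤ n)
    (ℓ : Finset (ℕ × ℕ) → ℕ)
    (hT1 : ∀ x < m, ℓ ({(x, 0), (x, 1), (x, 2)} : Finset (ℕ × ℕ)) = m - 1 - x)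
    (hT2 : ∀ x y i : ℕ, x < y → y < m → i < 3 →
      ℓ ({(x, i), (y, i), (boseOp m x y, (i + 1) % 3)} : Finset (ℕ × ℕ)) =
        m + i + 3 * x + 3 * (y * (y - 1)) / 2) :
    (m % 4 = 1 →
      (∀ z < m, ∀ i < 3,
        (55 / 1728 : ℚ) * n ^ 3 + (1 / 192 : ℚ) * n ^ 2 - (9 / 64 : ℚ) * n - 31 / 64 ≤
          ((boseDualSum m ℓ z i : ℕ) : ℚ)) ∧
      (∃ z < m, ∃ i < 3,
        ((boseDualSum m ℓ z i : ℕ) : ℚ) =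
          (55 / 1728 : ℚ) * n ^ 3 + (1 / 192 : ℚ) * n ^ 2 - (9 / 64 : ℚ) * n - 31 / 64)) ∧
    (m % 4 = 3 → 33 ≤ n →
      (∀ z < m, ∀ i < 3,
        (55 / 1728 : ℚ) * n ^ 3 + (1 / 192 : ℚ) * n ^ 2 - (13 / 64 : ℚ) * n + 13 / 64 ≤
          ((boseDualSum m ℓ z i : ℕ) : ℚ)) ∧
      (∃ z < m, ∃ i < 3,
        ((boseDualSum m ℓ z i : ℕ) : ℚ) =
          (55 / 1728 : ℚ) * n ^ 3 + (1 / 192 : ℚ) * n ^ 2 - (13 / 64 : ℚ) * n + 13 / 64)) := by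
  -- main proof
  have hm9 : 9 ≤ m := by omega
  have hnq : (n : ℚ) = 3 * (m : ℚ) := by rw [hn]; push_cast; ring
  constructor
  · -- m ≡ 1 (mod 4)
    intro h4
    obtain ⟨k, hk⟩ : ∃ k, m = 4 * k + 1 := ⟨m / 4, by omega⟩
    have hk2 : 2 ≤ k := by omega
    have hkq : (2 : ℚ) ≤ (k : ℚ) := by exact_mod_cast hk2
    have hmq : (m : ℚ) = 4 * (k : ℚ) + 1 := by rw [hk]; push_cast; ring
    constructor
    · intro z hz i hi
      rcases Nat.lt_or_ge (2 * z) m with h2z | h2z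
      · -- lower branch
        rw [BoseAux.dualSum_lo hm h2z hi ℓ hT1 hT2, hnq, hmq]
        have hzq0 : (0 : ℚ) ≤ (z : ℚ) := by positivity
        have hzup : (z : ℚ) ≤ 2 * (k : ℚ) + 1 := by
          have : z ≤ 2 * k + 1 := by omega
          exact_mod_cast this
        rcases Nat.lt_trichotomy z k with hzk | hzk | hzk
        · have hza : (z : ℚ) ≤ (k : ℚ) - 1 := by
            have : z + 1 ≤ k := hzk
            have := (Nat.cast_le (α := ℚ)).2 this
            push_cast at this; linarith
          have e1 : (0:ℚ) ≤ ((k:ℚ) - z) * (((k:ℚ) - 1 - z) * (5*(k:ℚ)^2 - 12*k + 5)) := by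
            have : (0:ℚ) ≤ 5*(k:ℚ)^2 - 12*k + 5 := by nlinarith
            have h1 : (0:ℚ) ≤ (k:ℚ) - z := by linarith
            have h2 : (0:ℚ) ≤ (k:ℚ) - 1 - z := by linarith
            positivity
          have e2 : (0:ℚ) ≤ ((k:ℚ) - z) * ((z:ℚ) * (3*(k:ℚ) - 5)) := by
            have h1 : (0:ℚ) ≤ (k:ℚ) - z := by linarith
            have h2 : (0:ℚ) ≤ 3*(k:ℚ) - 5 := by linarith
            positivity
          have e3 : (0:ℚ) ≤ ((k:ℚ) - z) * ((z:ℚ) * (((k:ℚ) - 1) * ((k:ℚ) - 1 - z))) := by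
            have h1 : (0:ℚ) ≤ (k:ℚ) - z := by linarith
            have h2 : (0:ℚ) ≤ (k:ℚ) - 1 - z := by linarith
            have h3 : (0:ℚ) ≤ (k:ℚ) - 1 := by linarith
            positivity
          interval_cases i <;> norm_num <;> nlinarith [e1, e2, e3, hkq, hzq0]
        · subst hzk
          interval_cases i <;> norm_num <;> nlinarith [hkq]
        · have hza : (k : ℚ) + 1 ≤ (z : ℚ) := by
            have : k + 1 ≤ z := hzk
            have := (Nat.cast_le (α := ℚ)).2 this
            push_cast at this; linarith
          have e1 : (0:ℚ) ≤ ((z:ℚ) - k) * (15*(k:ℚ) - 7) := by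
            have h1 : (0:ℚ) ≤ (z:ℚ) - k := by linarith
            have h2 : (0:ℚ) ≤ 15*(k:ℚ) - 7 := by linarith
            positivity
          have e2 : (0:ℚ) ≤ ((z:ℚ) - k) * (((z:ℚ) - k - 1) * (4*(z:ℚ) + 5*k - 2)) := by
            have h1 : (0:ℚ) ≤ (z:ℚ) - k := by linarith
            have h2 : (0:ℚ) ≤ (z:ℚ) - k - 1 := by linarith
            have h3 : (0:ℚ) ≤ 4*(z:ℚ) + 5*k - 2 := by linarith
            positivity
          interval_cases i <;> norm_num <;> nlinarith [e1, e2, hkq, hzq0]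
      · -- upper branch
        rw [BoseAux.dualSum_hi hm h2z hz hi ℓ hT1 hT2, hnq, hmq]
        have hw : (0:ℚ) ≤ (z:ℚ) - (2*(k:ℚ) + 1) := by
          have : 2*k + 1 ≤ z := by omega
          have := (Nat.cast_le (α := ℚ)).2 this
          push_cast at this; linarith
        have hk0 : (0:ℚ) ≤ (k:ℚ) := by positivity
        have hk2' : (0:ℚ) ≤ (k:ℚ) - 2 := by linarith
        have w2 : (0:ℚ) ≤ ((z:ℚ) - (2*(k:ℚ)+1))^2 := sq_nonneg _
        have w3 : (0:ℚ) ≤ ((z:ℚ) - (2*(k:ℚ)+1))^2 * ((z:ℚ) - (2*(k:ℚ)+1)) :=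
          mul_nonneg w2 hw
        have kw2 : (0:ℚ) ≤ (k:ℚ) * ((z:ℚ) - (2*(k:ℚ)+1))^2 := mul_nonneg hk0 w2
        have k2w : (0:ℚ) ≤ (k:ℚ)^2 * ((z:ℚ) - (2*(k:ℚ)+1)) := mul_nonneg (sq_nonneg _) hw
        have k2mw : (0:ℚ) ≤ ((k:ℚ) - 2) * ((z:ℚ) - (2*(k:ℚ)+1)) := mul_nonneg hk2' hw
        interval_cases i <;> norm_num <;>
          nlinarith [w2, w3, kw2, k2w, k2mw, hw, hk2', hkq, mul_nonneg hk0 hk0,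
            mul_nonneg (mul_nonneg hk0 hk0) hk0]
    · refine ⟨k, by omega, 0, by norm_num, ?_⟩
      rw [BoseAux.dualSum_lo hm (by omega) (by norm_num) ℓ hT1 hT2, hnq, hmq]
      norm_num
      ring
  · -- m ≡ 3 (mod 4)
    intro h4 hn33
    obtain ⟨k, hk⟩ : ∃ k, m = 4 * k + 3 := ⟨m / 4, by omega⟩
    have hk2 : 2 ≤ k := by omega
    have hkq : (2 : ℚ) ≤ (k : ℚ) := by exact_mod_cast hk2
    have hmq : (m : ℚ) = 4 * (k : ℚ) + 3 := by rw [hk]; push_cast; ring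
    constructor
    · intro z hz i hi
      rcases Nat.lt_or_ge (2 * z) m with h2z | h2z
      · rw [BoseAux.dualSum_lo hm h2z hi ℓ hT1 hT2, hnq, hmq]
        have hzq0 : (0 : ℚ) ≤ (z : ℚ) := by positivity
        have hzup : (z : ℚ) ≤ 2 * (k : ℚ) + 1 := by
          have : z ≤ 2 * k + 1 := by omega
          exact_mod_cast this
        rcases Nat.lt_trichotomy z k with hzk | hzk | hzk
        · have hza : (z : ℚ) ≤ (k : ℚ) - 1 := by
            have : z + 1 ≤ k := hzk
            have := (Nat.cast_le (α := ℚ)).2 this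
            push_cast at this; linarith
          have e1 : (0:ℚ) ≤ ((k:ℚ) - z) * (((k:ℚ) - 1 - z) * (320*(k:ℚ)^2 - 288*k - 160)) := by
            have : (0:ℚ) ≤ 320*(k:ℚ)^2 - 288*k - 160 := by nlinarith
            have h1 : (0:ℚ) ≤ (k:ℚ) - z := by linarith
            have h2 : (0:ℚ) ≤ (k:ℚ) - 1 - z := by linarith
            positivity
          have e2 : (0:ℚ) ≤ ((k:ℚ) - z) * ((z:ℚ) * (768*(k:ℚ) - 896)) := by
            have h1 : (0:ℚ) ≤ (k:ℚ) - z := by linarith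
            have h2 : (0:ℚ) ≤ 768*(k:ℚ) - 896 := by linarith
            positivity
          have e3 : (0:ℚ) ≤ ((k:ℚ) - z) * ((z:ℚ) * (((k:ℚ) - 1) * ((k:ℚ) - 1 - z))) := by
            have h1 : (0:ℚ) ≤ (k:ℚ) - z := by linarith
            have h2 : (0:ℚ) ≤ (k:ℚ) - 1 - z := by linarith
            have h3 : (0:ℚ) ≤ (k:ℚ) - 1 := by linarith
            positivity
          interval_cases i <;> norm_num <;> nlinarith [e1, e2, e3, hkq, hzq0]
        · subst hzk
          interval_cases i <;> norm_num <;> nlinarith [hkq]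
        · have hza : (k : ℚ) + 1 ≤ (z : ℚ) := by
            have : k + 1 ≤ z := hzk
            have := (Nat.cast_le (α := ℚ)).2 this
            push_cast at this; linarith
          have e1 : (0:ℚ) ≤ ((z:ℚ) - k) * (384*(k:ℚ) - 64) := by
            have h1 : (0:ℚ) ≤ (z:ℚ) - k := by linarith
            have h2 : (0:ℚ) ≤ 384*(k:ℚ) - 64 := by linarith
            positivity
          have e2 : (0:ℚ) ≤ ((z:ℚ) - k) * (((z:ℚ) - k - 1) * (256*(z:ℚ) + 320*k - 224)) := by
            have h1 : (0:ℚ) ≤ (z:ℚ) - k := by linarith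
            have h2 : (0:ℚ) ≤ (z:ℚ) - k - 1 := by linarith
            have h3 : (0:ℚ) ≤ 256*(z:ℚ) + 320*k - 224 := by linarith
            positivity
          interval_cases i <;> norm_num <;> nlinarith [e1, e2, hkq, hzq0]
      · rw [BoseAux.dualSum_hi hm h2z hz hi ℓ hT1 hT2, hnq, hmq]
        have hw : (0:ℚ) ≤ (z:ℚ) - (2*(k:ℚ) + 2) := by
          have : 2*k + 2 ≤ z := by omega
          have := (Nat.cast_le (α := ℚ)).2 this
          push_cast at this; linarith
        have hk0 : (0:ℚ) ≤ (k:ℚ) := by positivity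
        have hk2' : (0:ℚ) ≤ (k:ℚ) - 2 := by linarith
        have w2 : (0:ℚ) ≤ ((z:ℚ) - (2*(k:ℚ)+2))^2 := sq_nonneg _
        have w3 : (0:ℚ) ≤ ((z:ℚ) - (2*(k:ℚ)+2))^2 * ((z:ℚ) - (2*(k:ℚ)+2)) :=
          mul_nonneg w2 hw
        have kw2 : (0:ℚ) ≤ (k:ℚ) * ((z:ℚ) - (2*(k:ℚ)+2))^2 := mul_nonneg hk0 w2
        have k2w : (0:ℚ) ≤ (k:ℚ)^2 * ((z:ℚ) - (2*(k:ℚ)+2)) := mul_nonneg (sq_nonneg _) hw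
        have k2mw : (0:ℚ) ≤ ((k:ℚ) - 2) * ((z:ℚ) - (2*(k:ℚ)+2)) := mul_nonneg hk2' hw
        interval_cases i <;> norm_num <;>
          nlinarith [w2, w3, kw2, k2w, k2mw, hw, hk2', hkq, mul_nonneg hk0 hk0,
            mul_nonneg (mul_nonneg hk0 hk0) hk0]
    · refine ⟨k, by omega, 0, by norm_num, ?_⟩
      rw [BoseAux.dualSum_lo hm (by omega) (by norm_num) ℓ hT1 hT2, hnq, hmq]
      norm_num
      ring
end
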